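/- arXiv:1907.09031 — 3 statements merged into one kernel-verified Lean document; each statement's English description precedes it below -/
import Mathlib

section
/- Let R and S be rings and ρ : R → S a ring homomorphism, so that S is an (S,R)-bimodule via ρ. Let C be a non-negatively indexed chain complex of free left R-modules with H_0(C) = 0 and H_1(C) = 0. Then the base-changed chain complex S ⊗_R C of left S-modules satisfies H_0(S ⊗_R C) = 0 and H_1(S ⊗_R C) = 0. -/
open TensorProduct

/-- The base change `S ⊗_R C` of a left `R`-module `C` along a ring
homomorphism `ρ : R → S` (with `S` regarded as an `(S,R)`-bimodule via `ρ`),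
realised as the quotient of the left `S`-module `S ⊗_ℤ C` by the
`S`-submodule generated by the relations `(s·ρ(r)) ⊗ c − s ⊗ (r·c)`. -/
noncomputable def baseChangeRel {R S : Type} [Ring R] [Ring S] (ρ : R →+* S)
    (C : Type) [AddCommGroup C] [Module R C] : Submodule S (S ⊗[ℤ] C) :=
  Submodule.span S
    {x | ∃ (s : S) (r : R) (c : C), x = (s * ρ r) ⊗ₜ[ℤ] c - s ⊗ₜ[ℤ] (r • c)}

section aux
variable {R S : Type} [Ring R] [Ring S] (ρ : R →+* S)
variable {C C' : Type} [AddCommGroup C] [Module R C] [AddCommGroup C'] [Module R C']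

noncomputable def bcMap (S : Type) [Ring S] (f : C →ₗ[R] C') :
    S ⊗[ℤ] C →ₗ[S] S ⊗[ℤ] C' :=
  TensorProduct.AlgebraTensorModule.map (LinearMap.id : S →ₗ[S] S)
    f.toAddMonoidHom.toIntLinearMap

lemma bcMap_tmul (f : C →ₗ[R] C') (s : S) (c : C) :
    bcMap S f (s ⊗ₜ[ℤ] c) = s ⊗ₜ[ℤ] f c := rfl

lemma bcMap_rel (f : C →ₗ[R] C') :
    baseChangeRel ρ C ≤ (baseChangeRel ρ C').comap (bcMap S f) := by
  rw [baseChangeRel, Submodule.span_le]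
  rintro x ⟨s, r, c, rfl⟩
  simp only [SetLike.mem_coe, Submodule.mem_comap, map_sub, bcMap_tmul]
  have : f (r • c) = r • f c := f.map_smul r c
  rw [this]
  exact Submodule.subset_span ⟨s, r, f c, rfl⟩

noncomputable def bcQMap (f : C →ₗ[R] C') :
    ((S ⊗[ℤ] C) ⧸ baseChangeRel ρ C) →ₗ[S] ((S ⊗[ℤ] C') ⧸ baseChangeRel ρ C') :=
  Submodule.mapQ _ _ (bcMap S f) (bcMap_rel ρ f)

lemma bcQMap_mk (f : C →ₗ[R] C') (x : S ⊗[ℤ] C) :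
    bcQMap ρ f (Submodule.Quotient.mk x) = Submodule.Quotient.mk (bcMap S f x) :=
  Submodule.mapQ_apply _ _ _ _

end aux


/-- Let `R`, `S` be rings and `ρ : R → S` a ring homomorphism,
so that `S` is an `(S,R)`-bimodule via `ρ`.  Let `C` be a non-negatively
indexed chain complex of free left `R`-modules (`∂_n = d (n-1) : C n → C (n-1)`)
with `H₀(C) = 0` (i.e. `∂₁` surjective) and `H₁(C) = 0`
(i.e. `ker ∂₁ ⊆ im ∂₂`).  Then the base-changed chain complex `S ⊗_R C` of left
`S`-modules, with differentials `D n = id_S ⊗ d n`, satisfies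
`H₀(S ⊗_R C) = 0` and `H₁(S ⊗_R C) = 0`. -/
theorem statement4 {R S : Type} [Ring R] [Ring S] (ρ : R →+* S)
    (C : ℕ → Type) [∀ n, AddCommGroup (C n)] [∀ n, Module R (C n)]
    [∀ n, Module.Free R (C n)]
    (d : ∀ n, C (n + 1) →ₗ[R] C n)
    (hdd : ∀ n, (d n).comp (d (n + 1)) = 0)
    (hH0 : Function.Surjective (d 0))
    (hH1 : LinearMap.ker (d 0) ≤ LinearMap.range (d 1)) :
    ∃ D : ∀ n, ((S ⊗[ℤ] C (n + 1)) ⧸ baseChangeRel ρ (C (n + 1))) →ₗ[S]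
        ((S ⊗[ℤ] C n) ⧸ baseChangeRel ρ (C n)),
      (∀ (n : ℕ) (s : S) (c : C (n + 1)),
          D n (Submodule.Quotient.mk (s ⊗ₜ[ℤ] c)) =
            Submodule.Quotient.mk (s ⊗ₜ[ℤ] d n c)) ∧
      Function.Surjective (D 0) ∧
      LinearMap.ker (D 0) ≤ LinearMap.range (D 1) := by
  refine ⟨fun n => bcQMap ρ (d n), ?_, ?_, ?_⟩
  · intro n s c
    rw [bcQMap_mk, bcMap_tmul]
  · -- surjectivity
    have hF0 : Function.Surjective (bcMap S (d 0)) := by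
      intro x
      induction x using TensorProduct.induction_on with
      | zero => exact ⟨0, map_zero _⟩
      | tmul s c =>
        obtain ⟨c', hc'⟩ := hH0 c
        exact ⟨s ⊗ₜ c', by rw [bcMap_tmul, hc']⟩
      | add x y hx hy =>
        obtain ⟨a, ha⟩ := hx; obtain ⟨b, hb⟩ := hy
        exact ⟨a + b, by rw [map_add, ha, hb]⟩
    intro q
    obtain ⟨x, rfl⟩ := Submodule.Quotient.mk_surjective _ q
    obtain ⟨y, hy⟩ := hF0 x
    exact ⟨Submodule.Quotient.mk y, by rw [bcQMap_mk, hy]⟩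
  · -- kernel
    obtain ⟨σ, hσ⟩ := Module.projective_lifting_property (d 0)
      (LinearMap.id : C 0 →ₗ[R] C 0) hH0
    -- π := id - σ ∘ d 0 has range ⊆ range (d 1)
    set π : C 1 →ₗ[R] C 1 := LinearMap.id - σ.comp (d 0) with hπ
    have hπrange : ∀ c : C 1, π c ∈ LinearMap.range (d 1) := by
      intro c
      apply hH1
      have : (d 0) (π c) = d 0 c - (d 0) (σ (d 0 c)) := by
        simp [hπ, map_sub]
      have h2 : (d 0) (σ (d 0 c)) = d 0 c := by
        have := congrArg (fun g => g (d 0 c)) hσ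
        simpa using this
      simp [LinearMap.mem_ker, this, h2]
    intro q hq
    obtain ⟨x, rfl⟩ := Submodule.Quotient.mk_surjective _ q
    rw [LinearMap.mem_ker, bcQMap_mk, Submodule.Quotient.mk_eq_zero] at hq
    -- x = bcMap π x + bcMap σ (bcMap (d 0) x)
    have hsplit : ∀ y : S ⊗[ℤ] C 1, y = bcMap S π y + bcMap S σ (bcMap S (d 0) y) := by
      intro y
      induction y using TensorProduct.induction_on with
      | zero => simp
      | tmul s c =>
        rw [bcMap_tmul, bcMap_tmul, bcMap_tmul, hπ]
        simp only [LinearMap.sub_apply, LinearMap.id_apply, LinearMap.comp_apply]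
        rw [TensorProduct.tmul_sub]
        abel
      | add a b ha hb =>
        simp only [map_add]
        conv_lhs => rw [ha, hb]
        abel
    -- second summand is in the relation submodule
    have hmem : bcMap S σ (bcMap S (d 0) x) ∈ baseChangeRel ρ (C 1) :=
      bcMap_rel ρ σ hq
    -- first summand is in range of bcMap (d 1)
    have hrange : ∀ y : S ⊗[ℤ] (C 1), bcMap S π y ∈ LinearMap.range (bcMap S (d 1)) := by
      intro y
      induction y using TensorProduct.induction_on with
      | zero => simp
      | tmul s c =>
        obtain ⟨c'', hc''⟩ := hπrange c
        exact ⟨s ⊗ₜ c'', by rw [bcMap_tmul, bcMap_tmul, hc'']⟩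
      | add a b ha hb =>
        rw [map_add]
        exact Submodule.add_mem _ ha hb
    obtain ⟨y, hy⟩ := hrange x
    refine ⟨Submodule.Quotient.mk y, ?_⟩
    rw [bcQMap_mk, hy]
    conv_rhs => rw [hsplit x]
    rw [Submodule.Quotient.mk_add, (Submodule.Quotient.mk_eq_zero _).2 hmem, add_zero]
end

section
/- Let R be a commutative integral domain with field of fractions F, and let f : M → N be a surjective homomorphism of R-modules such that the induced F-linear map id_F ⊗ f : F ⊗_R M → F ⊗_R N is injective. Then f maps the torsion submodule of M onto the torsion submodule of N: for every n ∈ N with r·n = 0 for some nonzero r ∈ R, there exists m ∈ M with s·m = 0 for some nonzero s ∈ R and f(m) = n. -/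
open TensorProduct

/-- Let `R` be a commutative integral domain with field of
fractions `F`, and let `f : M → N` be a surjective homomorphism of `R`-modules
such that the induced map `id_F ⊗ f : F ⊗_R M → F ⊗_R N` is injective.  Then
`f` maps the torsion submodule of `M` onto the torsion submodule of `N`:
for every `n ∈ N` with `r • n = 0` for some nonzero `r ∈ R`, there is `m ∈ M`
with `s • m = 0` for some nonzero `s ∈ R` and `f m = n`. -/
theorem statement5 {R : Type} [CommRing R] [IsDomain R]
    {M N : Type} [AddCommGroup M] [AddCommGroup N] [Module R M] [Module R N]
    (f : M →ₗ[R] N) (hsurj : Function.Surjective f)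
    (hinj : Function.Injective (f.lTensor (FractionRing R))) :
    ∀ n : N, (∃ r : R, r ≠ 0 ∧ r • n = 0) →
      ∃ m : M, (∃ s : R, s ≠ 0 ∧ s • m = 0) ∧ f m = n := by
  intro n ⟨r, hr, hrn⟩
  obtain ⟨m, hm⟩ := hsurj n
  -- the map M → F ⊗ M is a localized module map
  have hbc : IsLocalizedModule (nonZeroDivisors R)
      (TensorProduct.mk R (FractionRing R) M 1) :=
    (isLocalizedModule_iff_isBaseChange (nonZeroDivisors R) (FractionRing R) _).mpr
      (TensorProduct.isBaseChange R M (FractionRing R))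
  -- r • m is in the kernel of f, hence goes to 0 in F ⊗ M
  have h1 : f.lTensor (FractionRing R) (TensorProduct.mk R (FractionRing R) M 1 (r • m)) = 0 := by
    simp only [TensorProduct.mk_apply, LinearMap.lTensor_tmul, map_smul, hm]
    rw [← TensorProduct.tmul_smul, hrn, TensorProduct.tmul_zero]
  have h2 : TensorProduct.mk R (FractionRing R) M 1 (r • m) = 0 := hinj (by simpa using h1)
  obtain ⟨⟨t, ht⟩, htm⟩ := (IsLocalizedModule.eq_zero_iff (nonZeroDivisors R) _).mp h2
  refine ⟨m, ⟨t * r, mul_ne_zero (nonZeroDivisors.ne_zero ht) hr, ?_⟩, hm⟩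
  rw [mul_smul]
  simpa using htm
end

section
/- Let R be a commutative integral domain and let C₃ →^{∂₃} C₂ →^{∂₂} C₁ →^{∂₁} C₀ be part of a chain complex of free R-modules (so ∂₁∘∂₂ = 0 and ∂₂∘∂₃ = 0). Suppose H₀ = C₀/im(∂₁) = 0, H₁ = ker(∂₁)/im(∂₂) = 0, and H₂ = ker(∂₂)/im(∂₃) is a torsion R-module. Then the second cohomology of the dual cochain complex Hom_R(C_*, R) vanishes: every R-linear map f : C₂ → R with f ∘ ∂₃ = 0 equals g ∘ ∂₂ for some R-linear map g : C₁ → R. -/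
/-- Let `R` be a commutative integral domain and let
`C₃ →^{∂₃} C₂ →^{∂₂} C₁ →^{∂₁} C₀` be part of a chain complex of free
`R`-modules.  Suppose `H₀ = C₀/im ∂₁ = 0`, `H₁ = ker ∂₁ / im ∂₂ = 0`, and
`H₂ = ker ∂₂ / im ∂₃` is a torsion `R`-module.  Then the second cohomology of
the dual cochain complex `Hom_R(C_*, R)` vanishes: every `R`-linear
`f : C₂ → R` with `f ∘ ∂₃ = 0` equals `g ∘ ∂₂` for some `R`-linear
`g : C₁ → R`. -/
theorem statement7 {R : Type} [CommRing R] [IsDomain R]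
    {C₃ C₂ C₁ C₀ : Type}
    [AddCommGroup C₃] [AddCommGroup C₂] [AddCommGroup C₁] [AddCommGroup C₀]
    [Module R C₃] [Module R C₂] [Module R C₁] [Module R C₀]
    [Module.Free R C₃] [Module.Free R C₂] [Module.Free R C₁] [Module.Free R C₀]
    (d₃ : C₃ →ₗ[R] C₂) (d₂ : C₂ →ₗ[R] C₁) (d₁ : C₁ →ₗ[R] C₀)
    (h12 : d₁.comp d₂ = 0) (h23 : d₂.comp d₃ = 0)
    (hH0 : Function.Surjective d₁)
    (hH1 : LinearMap.ker d₁ ≤ LinearMap.range d₂)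
    (hH2 : ∀ x ∈ LinearMap.ker d₂, ∃ r : R, r ≠ 0 ∧ r • x ∈ LinearMap.range d₃) :
    ∀ f : C₂ →ₗ[R] R, f.comp d₃ = 0 → ∃ g : C₁ →ₗ[R] R, f = g.comp d₂ := by
  intro f hf
  -- f vanishes on ker d₂
  have hker : LinearMap.ker d₂ ≤ LinearMap.ker f := by
    intro x hx
    obtain ⟨r, hr, y, hy⟩ := hH2 x hx
    have h0 : f (d₃ y) = 0 := by
      have := LinearMap.congr_fun hf y; simpa using this
    have : r * f x = 0 := by
      rw [hy] at h0
      simpa [smul_eq_mul] using h0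
    rcases mul_eq_zero.mp this with h | h
    · exact absurd h hr
    · exact h
  -- split d₁ using freeness (projectivity) of C₀
  obtain ⟨s, hs⟩ := Module.projective_lifting_property d₁ LinearMap.id hH0
  have hrange : ∀ x : C₁, x - s (d₁ x) ∈ LinearMap.range d₂ := by
    intro x
    apply hH1
    have : d₁ (s (d₁ x)) = d₁ x := LinearMap.congr_fun hs (d₁ x)
    simp [LinearMap.mem_ker, this]
  let fbar : (C₂ ⧸ LinearMap.ker d₂) →ₗ[R] R := (LinearMap.ker d₂).liftQ f hker
  let e := d₂.quotKerEquivRange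
  let h : LinearMap.range d₂ →ₗ[R] R := fbar.comp (e.symm : _ →ₗ[R] _)
  let π : C₁ →ₗ[R] LinearMap.range d₂ :=
    LinearMap.codRestrict _ (LinearMap.id - s.comp d₁) hrange
  refine ⟨h.comp π, ?_⟩
  ext x
  have hd : d₁ (d₂ x) = 0 := LinearMap.congr_fun h12 x
  have hπ : π (d₂ x) = ⟨d₂ x, ⟨x, rfl⟩⟩ := by
    apply Subtype.ext
    simp [π, LinearMap.codRestrict, hd]
  have he : e.symm ⟨d₂ x, ⟨x, rfl⟩⟩ = Submodule.Quotient.mk x := by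
    apply e.injective
    simp only [LinearEquiv.apply_symm_apply]
    apply Subtype.ext
    exact (LinearMap.quotKerEquivRange_apply_mk d₂ x).symm
  simp only [LinearMap.comp_apply, hπ, h, LinearEquiv.coe_coe, he, fbar,
    Submodule.liftQ_apply]
end
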